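/- If g ~ N(0,1), then for any τ ≥ 0, E[(g − ST(g; τ))²] = (1 − √(2/π)·τ·e^{−τ²/2}) + (τ² − 1)·erfc(τ/√2), where ST(g;τ) = sgn(g)·max(|g| − τ, 0) and erfc(t) = (2/√π)∫_t^∞ e^{−s²} ds. -/

import Mathlib

open MeasureTheory ProbabilityTheory Set
open scoped ENNReal NNReal

/-- Complementary error function erfc(t) = (2/√π) ∫_t^∞ e^{−s²} ds. -/
noncomputable def erfc (t : ℝ) : ℝ :=
  (2 / Real.sqrt Real.pi) * ∫ s in Set.Ioi t, Real.exp (-s^2)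

lemma st_ptwise (τ x : ℝ) (hτ : 0 ≤ τ) :
    (x - Real.sign x * max (|x| - τ) 0)^2 = min (x^2) (τ^2) := by
  rcases lt_trichotomy x 0 with h | h | h
  · rw [Real.sign_of_neg h, abs_of_neg h]
    rcases le_total (-x) τ with h2 | h2
    · rw [max_eq_right (by linarith), min_eq_left (by nlinarith)]
      ring
    · rw [max_eq_left (by linarith), min_eq_right (by nlinarith)]
      ring
  · subst h
    rw [show (0:ℝ)^2 = 0 by ring, min_eq_left (sq_nonneg τ)]
    simp
  · rw [Real.sign_of_pos h, abs_of_pos h]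
    rcases le_total x τ with h2 | h2
    · rw [max_eq_right (by linarith), min_eq_left (by nlinarith)]
      ring
    · rw [max_eq_left (by linarith), min_eq_right (by nlinarith)]
      ring

/-- Second moment of the soft-thresholding residual of a standard Gaussian. -/
theorem stmt_17 (τ : ℝ) (hτ : 0 ≤ τ) :
    ∫ g : ℝ, (g - Real.sign g * max (|g| - τ) 0)^2 ∂(gaussianReal 0 1) =
      (1 - Real.sqrt (2 / Real.pi) * τ * Real.exp (-τ^2 / 2))
        + (τ^2 - 1) * erfc (τ / Real.sqrt 2) := by
  have hle : (-τ) ≤ τ := by linarith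
  have hπ : (0:ℝ) < Real.pi := Real.pi_pos
  set c : ℝ := (Real.sqrt (2 * Real.pi))⁻¹ with hc
  -- basic integrability
  have hD : Integrable (fun x : ℝ => Real.exp (-x^2/2)) := by
    have := integrable_exp_neg_mul_sq (by norm_num : (0:ℝ) < 1/2)
    convert this using 2 with x
    ring
  -- Step A: reduce the Gaussian integral to a Lebesgue integral
  rw [gaussianReal_of_var_ne_zero _ one_ne_zero]
  have hpdf : gaussianPDF 0 1 = fun x => ((gaussianPDFReal 0 1 x).toNNReal : ℝ≥0∞) := rfl
  rw [hpdf, integral_withDensity_eq_integral_smul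
    ((measurable_gaussianPDFReal 0 1).real_toNNReal) _]
  have hA : ∫ x : ℝ, (gaussianPDFReal 0 1 x).toNNReal • (x - Real.sign x * max (|x| - τ) 0)^2
      = c * ∫ x : ℝ, min (x^2) (τ^2) * Real.exp (-x^2/2) := by
    rw [← integral_const_mul]
    congr 1 with x
    rw [NNReal.smul_def, Real.coe_toNNReal _ (gaussianPDFReal_nonneg 0 1 x), smul_eq_mul]
    rw [show gaussianPDFReal 0 1 x = c * Real.exp (-x^2/2) by simp [hc, gaussianPDFReal]]
    rw [st_ptwise τ x hτ]
    ring
  rw [hA]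
  -- Step B: split the integral
  have hfi : Integrable (fun x : ℝ => min (x^2) (τ^2) * Real.exp (-x^2/2)) := by
    apply hD.bdd_mul (c := τ^2) ((continuous_pow 2).min continuous_const).aestronglyMeasurable
    refine ae_of_all _ (fun x => ?_)
    rw [Real.norm_eq_abs, abs_of_nonneg (le_min (sq_nonneg x) (sq_nonneg τ))]
    exact min_le_right _ _
  have hcompl : (Ioc (-τ) τ)ᶜ = Iic (-τ) ∪ Ioi τ := by
    ext x
    simp only [mem_compl_iff, mem_Ioc, not_and_or, not_lt, not_le, mem_union, mem_Iic, mem_Ioi]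
  have hsplit : ∫ x : ℝ, min (x^2) (τ^2) * Real.exp (-x^2/2) =
      (∫ x in Ioc (-τ) τ, x^2 * Real.exp (-x^2/2))
        + τ^2 * ((∫ x in Iic (-τ), Real.exp (-x^2/2)) + ∫ x in Ioi τ, Real.exp (-x^2/2)) := by
    rw [← integral_add_compl (measurableSet_Ioc : MeasurableSet (Ioc (-τ) τ)) hfi]
    congr 1
    · apply setIntegral_congr_fun measurableSet_Ioc
      intro x hx
      have : x^2 ≤ τ^2 := by nlinarith [hx.1, hx.2]
      simp [min_eq_left this]
    · rw [hcompl, setIntegral_union (Iic_disjoint_Ioi hle) measurableSet_Ioi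
        (hfi.integrableOn) (hfi.integrableOn)]
      rw [setIntegral_congr_fun measurableSet_Iic (g := fun x => τ^2 * Real.exp (-x^2/2))
          (fun x hx => by
            have : τ^2 ≤ x^2 := by nlinarith [mem_Iic.mp hx]
            simp [min_eq_right this]),
        setIntegral_congr_fun measurableSet_Ioi (g := fun x => τ^2 * Real.exp (-x^2/2))
          (fun x hx => by
            have : τ^2 ≤ x^2 := by nlinarith [mem_Ioi.mp hx]
            simp [min_eq_right this]),
        integral_const_mul, integral_const_mul]
      ring
  -- Step C: reflection
  have hrefl : ∫ x in Iic (-τ), Real.exp (-x^2/2) = ∫ x in Ioi τ, Real.exp (-x^2/2) := by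
    rw [← integral_comp_neg_Ioi]
    congr 1 with x
    ring_nf
  set E : ℝ := ∫ x in Ioi τ, Real.exp (-x^2/2) with hE
  -- Step D: the middle interval integral of x^2 * exp
  have hmid : ∫ x in Ioc (-τ) τ, x^2 * Real.exp (-x^2/2) =
      -2*τ*Real.exp (-τ^2/2) + ∫ x in Ioc (-τ) τ, Real.exp (-x^2/2) := by
    have hF : ∀ x : ℝ, HasDerivAt (fun y => -y * Real.exp (-y^2/2))
        ((x^2-1) * Real.exp (-x^2/2)) x := by
      intro x
      have h1 : HasDerivAt (fun y : ℝ => -y^2/2) (-x) x := by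
        have := ((hasDerivAt_pow 2 x).neg).div_const 2
        refine this.congr_deriv ?_
        norm_num; ring
      have hexp := h1.exp
      have := ((hasDerivAt_id x).neg).mul hexp
      refine this.congr_deriv ?_
      simp
      ring
    have hc1 : Continuous fun x : ℝ => (x^2-1) * Real.exp (-x^2/2) := by fun_prop
    have hc2 : Continuous fun x : ℝ => Real.exp (-x^2/2) := by fun_prop
    have ftc := intervalIntegral.integral_eq_sub_of_hasDerivAt
        (f := fun y => -y * Real.exp (-y^2/2)) (fun x _ => hF x) (hc1.intervalIntegrable (-τ) τ)
    have hsp : ∫ x in (-τ)..τ, x^2 * Real.exp (-x^2/2)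
        = (∫ x in (-τ)..τ, (x^2-1) * Real.exp (-x^2/2)) + ∫ x in (-τ)..τ, Real.exp (-x^2/2) := by
      rw [← intervalIntegral.integral_add (hc1.intervalIntegrable _ _) (hc2.intervalIntegrable _ _)]
      congr 1 with x
      ring
    rw [← intervalIntegral.integral_of_le hle, hsp, ftc,
      intervalIntegral.integral_of_le hle]
    simp only [neg_sq, neg_neg]
    ring
  -- Step E: total mass
  have htot : ∫ x : ℝ, Real.exp (-x^2/2) = Real.sqrt (2 * Real.pi) := by
    have := integral_gaussian (1/2 : ℝ)
    rw [show Real.pi / (1/2) = 2 * Real.pi by ring] at this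
    rw [← this]
    congr 1 with x
    ring
  have hmid2 : ∫ x in Ioc (-τ) τ, Real.exp (-x^2/2) = Real.sqrt (2 * Real.pi) - 2 * E := by
    have := integral_add_compl (measurableSet_Ioc : MeasurableSet (Ioc (-τ) τ)) hD
    rw [htot, hcompl, setIntegral_union (Iic_disjoint_Ioi hle) measurableSet_Ioi
      (hD.integrableOn) (hD.integrableOn), hrefl, ← hE] at this
    linarith
  -- Step F: erfc substitution
  have herfc : erfc (τ / Real.sqrt 2) = (2 / Real.sqrt Real.pi) * ((Real.sqrt 2)⁻¹ * E) := by
    rw [erfc]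
    congr 1
    have h2 : (0:ℝ) < (Real.sqrt 2)⁻¹ := by positivity
    have key := integral_comp_mul_left_Ioi (fun s => Real.exp (-s^2)) τ h2
    have e : ∀ x:ℝ, Real.exp (-((Real.sqrt 2)⁻¹ * x)^2) = Real.exp (-x^2/2) := by
      intro x
      congr 1
      rw [mul_pow, show ((Real.sqrt 2)⁻¹)^2 = 1/2 by
        rw [inv_pow, Real.sq_sqrt (by norm_num : (0:ℝ) ≤ 2)]; norm_num]
      ring
    simp only [e, smul_eq_mul, inv_inv] at key
    rw [div_eq_inv_mul, hE, key, ← mul_assoc,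
      inv_mul_cancel₀ (by positivity : Real.sqrt 2 ≠ 0), one_mul]
  -- Final algebra
  rw [hsplit, hrefl, hmid, hmid2, herfc, hc]
  have hs2 : Real.sqrt (2 * Real.pi) = Real.sqrt 2 * Real.sqrt Real.pi :=
    Real.sqrt_mul (by norm_num) _
  have hs3 : Real.sqrt (2 / Real.pi) = Real.sqrt 2 / Real.sqrt Real.pi :=
    Real.sqrt_div (by norm_num) Real.pi
  have h2 : Real.sqrt 2 * Real.sqrt 2 = 2 := Real.mul_self_sqrt (by norm_num)
  have hsp : (0:ℝ) < Real.sqrt Real.pi := Real.sqrt_pos.mpr hπ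
  have hs2pos : (0:ℝ) < Real.sqrt 2 := by positivity
  rw [hs2, hs3]
  field_simp
  ring_nf
  linear_combination (τ * Real.exp (τ ^ 2 * (-1/2))) * h2
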